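/- Let n ≥ 3 and S = Bⁿ the n-fold product of the Boolean semiring. Then every resolving set of Γ₁(S) has cardinality at least n, and hence dim(Γ₁(S)) = n. -/

import Mathlib

/-- `x` is a zero-divisor of the commutative semiring `S`. -/
def IsZD {S : Type*} [CommSemiring S] (x : S) : Prop :=
  ∃ y : S, y ≠ 0 ∧ x * y = 0

/-- The total graph of a commutative semiring: distinct `x, y` are adjacent
iff `x + y` is a zero-divisor. -/
def totalGraph (S : Type*) [CommSemiring S] : SimpleGraph S where
  Adj x y := x ≠ y ∧ IsZD (x + y)
  symm := by
    constructor
    intro x y h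
    exact ⟨h.1.symm, by rw [add_comm]; exact h.2⟩
  loopless := by constructor; intro x h; exact h.1 rfl

/-- The induced subgraph of the total graph on the set of zero-divisors. -/
def gamma1 (S : Type*) [CommSemiring S] : SimpleGraph {x : S // IsZD x} :=
  SimpleGraph.comap Subtype.val (totalGraph S)

/-- A resolving set: distinct vertices have distinct distance vectors to `W`. -/
def IsResolving {V : Type*} (G : SimpleGraph V) (W : Set V) : Prop :=
  ∀ x y : V, (∀ w ∈ W, G.dist x w = G.dist y w) → x = y

/-- The metric dimension: the least cardinality of a resolving set. -/
noncomputable def metricDim {V : Type*} (G : SimpleGraph V) : ℕ :=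
  sInf {k | ∃ W : Set V, W.Finite ∧ W.ncard = k ∧ IsResolving G W}

/-- The Boolean semiring `𝔹 = {0,1}` with `1 + 1 = 1`. -/
inductive BB : Type
  | zero : BB
  | one : BB
deriving DecidableEq

instance : Zero BB := ⟨.zero⟩
instance : One BB := ⟨.one⟩
instance : Add BB := ⟨fun x y => match x, y with | .zero, y => y | .one, _ => .one⟩
instance : Mul BB := ⟨fun x y => match x, y with | .zero, _ => .zero | .one, y => y⟩
instance : Fintype BB := ⟨{.zero, .one}, by intro x; cases x <;> decide⟩

instance : CommSemiring BB where
  add_assoc := by decide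
  zero_add := by decide
  add_zero := by decide
  add_comm := by decide
  mul_assoc := by decide
  one_mul := by decide
  mul_one := by decide
  left_distrib := by decide
  right_distrib := by decide
  zero_mul := by decide
  mul_zero := by decide
  mul_comm := by decide
  nsmul := nsmulRec
  npow := npowRec

lemma BB.mul_eq_zero {a b : BB} : a * b = 0 ↔ a = 0 ∨ b = 0 := by
  cases a <;> cases b <;> decide

lemma BB.add_eq_zero' {a b : BB} : a + b = 0 ↔ a = 0 ∧ b = 0 := by
  cases a <;> cases b <;> decide

lemma BB.eq_one_of_ne_zero {a : BB} (h : a ≠ 0) : a = 1 := by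
  cases a
  · exact absurd rfl h
  · rfl

lemma zd_iff {n : ℕ} (x : Fin n → BB) : IsZD x ↔ ∃ i, x i = 0 := by
  constructor
  · rintro ⟨y, hy, hxy⟩
    by_contra h
    push_neg at h
    apply hy
    funext i
    have h2 := congrFun hxy i
    simp only [Pi.mul_apply, Pi.zero_apply] at h2
    rcases BB.mul_eq_zero.mp h2 with h1 | h1
    · exact absurd h1 (h i)
    · exact h1
  · rintro ⟨i, hi⟩
    refine ⟨fun j => if j = i then 1 else 0, ?_, ?_⟩
    · intro h
      have := congrFun h i
      simp only [if_pos rfl, Pi.zero_apply] at this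
      exact (by decide : (1:BB) ≠ 0) this
    · funext j
      simp only [Pi.mul_apply, Pi.zero_apply]
      by_cases hji : j = i
      · subst hji; rw [if_pos rfl, hi]; rfl
      · rw [if_neg hji]; exact mul_zero _

section Graph
open SimpleGraph

variable {n : ℕ}

lemma adj_iff (x y : {x : Fin n → BB // IsZD x}) :
    (gamma1 (Fin n → BB)).Adj x y ↔ x ≠ y ∧ ∃ i, x.1 i = 0 ∧ y.1 i = 0 := by
  show x.1 ≠ y.1 ∧ IsZD (x.1 + y.1) ↔ _
  rw [zd_iff]
  constructor
  · rintro ⟨h1, i, hi⟩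
    refine ⟨fun h => h1 (by rw [h]), i, ?_⟩
    simpa only [Pi.add_apply, BB.add_eq_zero'] using hi
  · rintro ⟨h1, i, hx, hy⟩
    exact ⟨fun h => h1 (Subtype.ext h), i, by simp [Pi.add_apply, BB.add_eq_zero', hx, hy]⟩

/-- The zero vector as a vertex. -/
def vzero (hn : 1 ≤ n) : {x : Fin n → BB // IsZD x} :=
  ⟨0, (zd_iff _).mpr ⟨⟨0, hn⟩, rfl⟩⟩

lemma adj_vzero (hn : 1 ≤ n) (x : {x : Fin n → BB // IsZD x}) (hx : x ≠ vzero hn) :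
    (gamma1 (Fin n → BB)).Adj x (vzero hn) := by
  rw [adj_iff]
  obtain ⟨i, hi⟩ := (zd_iff x.1).mp x.2
  exact ⟨hx, i, hi, rfl⟩

lemma reach (hn : 1 ≤ n) (x y : {x : Fin n → BB // IsZD x}) :
    (gamma1 (Fin n → BB)).Reachable x y := by
  have hx : (gamma1 (Fin n → BB)).Reachable x (vzero hn) := by
    by_cases h : x = vzero hn
    · exact h ▸ Reachable.refl x
    · exact (adj_vzero hn x h).reachable
  have hy : (gamma1 (Fin n → BB)).Reachable y (vzero hn) := by
    by_cases h : y = vzero hn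
    · exact h ▸ Reachable.refl y
    · exact (adj_vzero hn y h).reachable
  exact hx.trans hy.symm

lemma dist_le_two (hn : 1 ≤ n) (x y : {x : Fin n → BB // IsZD x}) :
    (gamma1 (Fin n → BB)).dist x y ≤ 2 := by
  by_cases hxy : x = y
  · subst hxy; simp [SimpleGraph.dist_self]
  by_cases hadj : (gamma1 (Fin n → BB)).Adj x y
  · rw [SimpleGraph.dist_eq_one_iff_adj.mpr hadj]; omega
  · have hx : x ≠ vzero hn := by
      rintro rfl
      exact hadj ((adj_vzero hn y (fun h => hxy h.symm)).symm)
    have hy : y ≠ vzero hn := by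
      rintro rfl
      exact hadj (adj_vzero hn x hx)
    exact SimpleGraph.dist_le (SimpleGraph.Walk.cons (adj_vzero hn x hx)
        (SimpleGraph.Walk.cons ((adj_vzero hn y hy).symm) SimpleGraph.Walk.nil))

lemma dist_eq_two (hn : 1 ≤ n) (x y : {x : Fin n → BB // IsZD x}) (hxy : x ≠ y)
    (h : ¬ (gamma1 (Fin n → BB)).Adj x y) : (gamma1 (Fin n → BB)).dist x y = 2 := by
  have h1 : 1 ≤ (gamma1 (Fin n → BB)).dist x y := (reach hn x y).pos_dist_of_ne hxy
  have h2 := dist_le_two hn x y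
  have h3 : (gamma1 (Fin n → BB)).dist x y ≠ 1 := fun hc =>
    h (SimpleGraph.dist_eq_one_iff_adj.mp hc)
  omega

lemma adj_iff_of_dist_eq (hn : 1 ≤ n) {x y w : {x : Fin n → BB // IsZD x}}
    (hx : x ≠ w) (hy : y ≠ w)
    (h : (gamma1 (Fin n → BB)).dist x w = (gamma1 (Fin n → BB)).dist y w) :
    ((gamma1 (Fin n → BB)).Adj x w ↔ (gamma1 (Fin n → BB)).Adj y w) := by
  by_cases h1 : (gamma1 (Fin n → BB)).Adj x w <;>
    by_cases h2 : (gamma1 (Fin n → BB)).Adj y w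
  · exact ⟨fun _ => h2, fun _ => h1⟩
  · rw [SimpleGraph.dist_eq_one_iff_adj.mpr h1, dist_eq_two hn y w hy h2] at h; omega
  · rw [SimpleGraph.dist_eq_one_iff_adj.mpr h2, dist_eq_two hn x w hx h1] at h; omega
  · exact ⟨fun hc => absurd hc h1, fun hc => absurd hc h2⟩

end Graph

section Counting

variable {n : ℕ}

lemma not_zd_iff (x : Fin n → BB) : ¬ IsZD x ↔ x = fun _ => (1 : BB) := by
  rw [zd_iff]
  push_neg
  constructor
  · intro h; funext i; exact BB.eq_one_of_ne_zero (h i)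
  · intro h i; rw [h]; exact fun hc => (by decide : (1:BB) ≠ 0) hc

lemma card_V : Nat.card {x : Fin n → BB // IsZD x} = 2 ^ n - 1 := by
  classical
  rw [Nat.card_eq_fintype_card]
  have e : {x : Fin n → BB // IsZD x} ≃ {x : Fin n → BB // ¬ x = fun _ => (1:BB)} :=
    Equiv.subtypeEquivRight (fun x => by rw [← not_zd_iff, not_not])
  rw [Fintype.card_congr e, Fintype.card_subtype_compl, Fintype.card_subtype_eq,
    Fintype.card_fun, Fintype.card_fin]
  have : Fintype.card BB = 2 := by decide
  rw [this]

lemma three_le_lt_pow : ∀ m : ℕ, 3 ≤ m → m < 2 ^ (m - 1) := by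
  intro m hm
  induction m, hm using Nat.le_induction with
  | base => decide
  | succ m hm ih =>
    have h1 : m + 1 ≤ 2 ^ (m - 1) := ih
    have h2 : (0:ℕ) < 2 ^ (m - 1) := Nat.pow_pos (by norm_num)
    have h3 : m + 1 - 1 = (m - 1) + 1 := by omega
    rw [h3, pow_succ]
    omega

lemma lower_bound (hn : 3 ≤ n) (W : Set {x : Fin n → BB // IsZD x})
    (hres : IsResolving (gamma1 (Fin n → BB)) W) : n ≤ W.ncard := by
  classical
  by_contra hcon
  push_neg at hcon
  have hn1 : 1 ≤ n := by omega
  set G := gamma1 (Fin n → BB) with hG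
  -- injection from complement of W into W → Bool
  have hWcard : Fintype.card ↥W = W.ncard := by
    rw [← Nat.card_coe_set_eq, Nat.card_eq_fintype_card]
  have hinj : Function.Injective
      (fun (x : {x : {x : Fin n → BB // IsZD x} // x ∉ W}) (w : ↥W) =>
        decide (G.Adj x.1 w.1)) := by
    intro a b hab
    apply Subtype.ext
    apply hres
    intro w hw
    have ha : a.1 ≠ w := fun hc => a.2 (hc ▸ hw)
    have hb : b.1 ≠ w := fun hc => b.2 (hc ▸ hw)
    have h1 : G.Adj a.1 w ↔ G.Adj b.1 w := by
      have := congrFun hab ⟨w, hw⟩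
      simpa using this
    by_cases hadj : G.Adj a.1 w
    · rw [SimpleGraph.dist_eq_one_iff_adj.mpr hadj,
        SimpleGraph.dist_eq_one_iff_adj.mpr (h1.mp hadj)]
    · rw [dist_eq_two hn1 a.1 w ha hadj,
        dist_eq_two hn1 b.1 w hb (fun hc => hadj (h1.mpr hc))]
  have hcard := Fintype.card_le_of_injective _ hinj
  rw [Fintype.card_fun] at hcard
  have hcompl : Fintype.card {x : {x : Fin n → BB // IsZD x} // x ∉ W}
      = Fintype.card {x : Fin n → BB // IsZD x} - Fintype.card ↥W := by
    have := Fintype.card_subtype_compl (fun x : {x : Fin n → BB // IsZD x} => x ∈ W)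
    convert this using 2
  have hV : Fintype.card {x : Fin n → BB // IsZD x} = 2 ^ n - 1 := by
    rw [← Nat.card_eq_fintype_card, card_V]
  have hbool : Fintype.card Bool = 2 := by decide
  rw [hcompl, hV, hWcard, hbool] at hcard
  -- hcard : 2 ^ n - 1 - W.ncard ≤ 2 ^ W.ncard
  have h2 : (2:ℕ) ^ W.ncard ≤ 2 ^ (n - 1) :=
    Nat.pow_le_pow_right (by norm_num) (by omega)
  have h3 : n < 2 ^ (n - 1) := three_le_lt_pow n hn
  have h4 : (2:ℕ) ^ n = 2 ^ (n - 1) * 2 := by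
    rw [← pow_succ]
    congr 1
    omega
  omega

end Counting

section Upper

variable {n : ℕ}

def wfun (n : ℕ) (i : Fin n) : {x : Fin n → BB // IsZD x} :=
  ⟨fun j => if j = i then 0 else 1, (zd_iff _).mpr ⟨i, if_pos rfl⟩⟩

lemma wfun_inj : Function.Injective (wfun n) := by
  intro i j h
  by_contra hij
  have := congrFun (congrArg Subtype.val h) i
  simp only [wfun, if_pos rfl, if_neg hij] at this
  exact (by decide : (0:BB) ≠ 1) this

lemma adj_wfun {i : Fin n} (x : {x : Fin n → BB // IsZD x}) (hx : x ≠ wfun n i) :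
    (gamma1 (Fin n → BB)).Adj x (wfun n i) ↔ x.1 i = 0 := by
  rw [adj_iff]
  constructor
  · rintro ⟨-, j, hj, hw⟩
    by_cases hji : j = i
    · exact hji ▸ hj
    · simp only [wfun, if_neg hji] at hw
      exact absurd hw (by decide)
  · intro h
    exact ⟨hx, i, h, by simp [wfun]⟩

lemma wfun_resolving (hn : 1 ≤ n) :
    IsResolving (gamma1 (Fin n → BB)) (Set.range (wfun n)) := by
  intro x y h
  by_cases hx : x ∈ Set.range (wfun n)
  · obtain ⟨i, rfl⟩ := hx
    have h0 := h (wfun n i) ⟨i, rfl⟩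
    rw [SimpleGraph.dist_self] at h0
    by_contra hne
    have := (reach hn y (wfun n i)).pos_dist_of_ne (Ne.symm hne)
    omega
  · by_cases hy : y ∈ Set.range (wfun n)
    · obtain ⟨i, rfl⟩ := hy
      have h0 := h (wfun n i) ⟨i, rfl⟩
      rw [SimpleGraph.dist_self] at h0
      by_contra hne
      have := (reach hn x (wfun n i)).pos_dist_of_ne hne
      omega
    · apply Subtype.ext
      funext i
      have hxi : x ≠ wfun n i := fun hc => hx ⟨i, hc.symm⟩
      have hyi : y ≠ wfun n i := fun hc => hy ⟨i, hc.symm⟩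
      have hadj := adj_iff_of_dist_eq hn hxi hyi (h (wfun n i) ⟨i, rfl⟩)
      rw [adj_wfun x hxi, adj_wfun y hyi] at hadj
      by_cases hx0 : x.1 i = 0
      · rw [hx0, hadj.mp hx0]
      · rw [BB.eq_one_of_ne_zero hx0,
          BB.eq_one_of_ne_zero (fun hc => hx0 (hadj.mpr hc))]

lemma wfun_ncard : (Set.range (wfun n)).ncard = n := by
  rw [← Nat.card_coe_set_eq, Nat.card_range_of_injective wfun_inj,
    Nat.card_eq_fintype_card, Fintype.card_fin]

end Upper

theorem stmt11 (n : ℕ) (hn : 3 ≤ n) :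
    (∀ W : Set {x : Fin n → BB // IsZD x},
        IsResolving (gamma1 (Fin n → BB)) W → n ≤ W.ncard) ∧
      metricDim (gamma1 (Fin n → BB)) = n := by
  have hn1 : 1 ≤ n := by omega
  refine ⟨fun W hW => lower_bound hn W hW, ?_⟩
  have hmem : n ∈ {k | ∃ W : Set {x : Fin n → BB // IsZD x},
      W.Finite ∧ W.ncard = k ∧ IsResolving (gamma1 (Fin n → BB)) W} :=
    ⟨Set.range (wfun n), Set.toFinite _, wfun_ncard, wfun_resolving hn1⟩
  refine le_antisymm (Nat.sInf_le hmem) (le_csInf ⟨n, hmem⟩ ?_)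
  rintro k ⟨W, -, rfl, hres⟩
  exact lower_bound hn W hres
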